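/- Let λ be Lebesgue measure on [0,1] and let (a_k)_{k∈ℤ} be nonnegative integrable functions on [0,1] with D := sup_{k∈ℤ} ∫ a_k dλ < ∞. Suppose there exist δ > 0 and N > 0 such that ∫ |a_i − a_j| dλ > δ whenever i > N and j < −N. Then there exist c > 0 and n₀ such that for every integer n ≥ n₀, Σ_{k∈ℤ} ∫ ( √(a_{k+n}) − √(a_k) )² dλ ≥ c·n. (In particular, one may use the inequality ∫|e − f| dλ ≤ ‖√e − √f‖_{L²(λ)} · ( √(∫ e dλ) + √(∫ f dλ) ), valid for nonnegative integrable e, f.) -/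

import Mathlib

open MeasureTheory

/-- Let `λ` be Lebesgue measure on `[0,1]` and let `(a_k)_{k∈ℤ}` be nonnegative integrable
functions on `[0,1]` with `sup_k ∫ a_k dλ ≤ D < ∞`.  If there are `δ > 0` and `N > 0` such
that `∫ |a_i - a_j| dλ > δ` whenever `i > N` and `j < -N`, then there are `c > 0` and `n₀`
such that for every `n ≥ n₀`, `Σ_{k∈ℤ} ∫ (√(a_{k+n}) - √(a_k))² dλ ≥ c·n`
(the possibly infinite sum is computed in `ℝ≥0∞`). -/
theorem stmt19 (a : ℤ → ℝ → ℝ)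
    (hnn : ∀ k : ℤ, ∀ x ∈ Set.Icc (0 : ℝ) 1, 0 ≤ a k x)
    (hint : ∀ k : ℤ, IntegrableOn (a k) (Set.Icc (0 : ℝ) 1))
    (D : ℝ) (hD : ∀ k : ℤ, ∫ x in Set.Icc (0 : ℝ) 1, a k x ≤ D)
    (δ : ℝ) (hδ : 0 < δ) (N : ℤ) (hN : 0 < N)
    (hsep : ∀ i j : ℤ, N < i → j < -N →
      δ < ∫ x in Set.Icc (0 : ℝ) 1, |a i x - a j x|) :
    ∃ c : ℝ, 0 < c ∧ ∃ n₀ : ℕ, ∀ n : ℕ, n₀ ≤ n →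
      ENNReal.ofReal (c * n) ≤ ∑' k : ℤ, ENNReal.ofReal
        (∫ x in Set.Icc (0 : ℝ) 1,
          (Real.sqrt (a (k + (n : ℤ)) x) - Real.sqrt (a k x)) ^ 2) := by
  have hmeas : MeasurableSet (Set.Icc (0 : ℝ) 1) := measurableSet_Icc
  -- D is positive
  have hDpos : 0 < D := by
    have h1 := hsep (N + 1) (-N - 1) (by omega) (by omega)
    have h2 : ∫ x in Set.Icc (0 : ℝ) 1, |a (N + 1) x - a (-N - 1) x|
        ≤ ∫ x in Set.Icc (0 : ℝ) 1, (a (N + 1) x + a (-N - 1) x) := by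
      refine setIntegral_mono_on (((hint (N + 1)).sub (hint (-N - 1))).abs)
        ((hint (N + 1)).add (hint (-N - 1))) hmeas fun x hx => ?_
      have h3 := hnn (N + 1) x hx
      have h4 := hnn (-N - 1) x hx
      exact abs_le.mpr ⟨by linarith, by linarith⟩
    have h5 : ∫ x in Set.Icc (0 : ℝ) 1, (a (N + 1) x + a (-N - 1) x)
        = (∫ x in Set.Icc (0 : ℝ) 1, a (N + 1) x) + ∫ x in Set.Icc (0 : ℝ) 1, a (-N - 1) x :=
      integral_add (hint (N + 1)) (hint (-N - 1))
    have h6 := hD (N + 1)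
    have h7 := hD (-N - 1)
    linarith
  -- a.e. strong measurability of the square roots
  have sm : ∀ k : ℤ, AEStronglyMeasurable (fun x => Real.sqrt (a k x))
      ((volume : Measure ℝ).restrict (Set.Icc (0 : ℝ) 1)) := fun k =>
    Real.continuous_sqrt.comp_aestronglyMeasurable (hint k).aestronglyMeasurable
  -- key pointwise lower bound
  have key : ∀ i j : ℤ, N < i → j < -N →
      δ ^ 2 / (4 * D) ≤ ∫ x in Set.Icc (0 : ℝ) 1,
        (Real.sqrt (a i x) - Real.sqrt (a j x)) ^ 2 := by
    intro i j hi hj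
    have hnni := fun x hx => hnn i x hx
    have hnnj := fun x hx => hnn j x hx
    -- integrability of the squared difference and squared sum
    have hu2int : IntegrableOn (fun x => (Real.sqrt (a i x) - Real.sqrt (a j x)) ^ 2)
        (Set.Icc (0 : ℝ) 1) := by
      refine Integrable.mono (((hint i).abs.add (hint j).abs).const_mul 2) ?_ ?_
      · exact (((sm i).sub (sm j)).mul ((sm i).sub (sm j))).congr
          (Filter.Eventually.of_forall fun x => (sq ((Real.sqrt (a i x) - Real.sqrt (a j x)))).symm)
      · filter_upwards [ae_restrict_mem hmeas] with x hx
        have h1 := Real.sq_sqrt (hnni x hx)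
        have h2 := Real.sq_sqrt (hnnj x hx)
        have h3 := Real.sqrt_nonneg (a i x)
        have h4 := Real.sqrt_nonneg (a j x)
        simp only [Pi.add_apply]
        rw [Real.norm_eq_abs, Real.norm_eq_abs, abs_of_nonneg (sq_nonneg _),
          abs_of_nonneg (by positivity : (0:ℝ) ≤ 2 * (|a i x| + |a j x|))]
        have h5 : a i x ≤ |a i x| := le_abs_self _
        have h6 : a j x ≤ |a j x| := le_abs_self _
        nlinarith [sq_nonneg (Real.sqrt (a i x) + Real.sqrt (a j x))]
    have hv2int : IntegrableOn (fun x => (Real.sqrt (a i x) + Real.sqrt (a j x)) ^ 2)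
        (Set.Icc (0 : ℝ) 1) := by
      refine Integrable.mono (((hint i).abs.add (hint j).abs).const_mul 2) ?_ ?_
      · exact (((sm i).add (sm j)).mul ((sm i).add (sm j))).congr
          (Filter.Eventually.of_forall fun x => (sq ((Real.sqrt (a i x) + Real.sqrt (a j x)))).symm)
      · filter_upwards [ae_restrict_mem hmeas] with x hx
        have h1 := Real.sq_sqrt (hnni x hx)
        have h2 := Real.sq_sqrt (hnnj x hx)
        have h3 := Real.sqrt_nonneg (a i x)
        have h4 := Real.sqrt_nonneg (a j x)
        simp only [Pi.add_apply]
        rw [Real.norm_eq_abs, Real.norm_eq_abs, abs_of_nonneg (sq_nonneg _),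
          abs_of_nonneg (by positivity : (0:ℝ) ≤ 2 * (|a i x| + |a j x|))]
        have h5 : a i x ≤ |a i x| := le_abs_self _
        have h6 : a j x ≤ |a j x| := le_abs_self _
        nlinarith [sq_nonneg (Real.sqrt (a i x) - Real.sqrt (a j x))]
    -- Memℒp 2 facts
    have htwo : (2 : ENNReal) = ENNReal.ofReal (2 : ℝ) := by norm_num
    have hu : MemLp (fun x => Real.sqrt (a i x) - Real.sqrt (a j x)) (ENNReal.ofReal (2 : ℝ))
        ((volume : Measure ℝ).restrict (Set.Icc (0 : ℝ) 1)) := by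
      rw [← htwo]
      exact (memLp_two_iff_integrable_sq ((sm i).sub (sm j))).mpr hu2int
    have hv : MemLp (fun x => Real.sqrt (a i x) + Real.sqrt (a j x)) (ENNReal.ofReal (2 : ℝ))
        ((volume : Measure ℝ).restrict (Set.Icc (0 : ℝ) 1)) := by
      rw [← htwo]
      exact (memLp_two_iff_integrable_sq ((sm i).add (sm j))).mpr hv2int
    -- Cauchy–Schwarz
    have hconj : Real.HolderConjugate 2 2 := Real.HolderConjugate.two_two
    have hCS := integral_mul_norm_le_Lp_mul_Lq hconj hu hv
    -- identify |a i - a j| with ‖u‖ * ‖v‖ on the interval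
    have heq : ∫ x in Set.Icc (0 : ℝ) 1, |a i x - a j x|
        = ∫ x in Set.Icc (0 : ℝ) 1,
            ‖Real.sqrt (a i x) - Real.sqrt (a j x)‖ * ‖Real.sqrt (a i x) + Real.sqrt (a j x)‖ := by
      refine setIntegral_congr_fun hmeas fun x hx => ?_
      have h1 := Real.sq_sqrt (hnni x hx)
      have h2 := Real.sq_sqrt (hnnj x hx)
      rw [Real.norm_eq_abs, Real.norm_eq_abs, ← abs_mul]
      congr 1
      linear_combination -h1 + h2
    -- rewrite the rpow-2 integrals as square integrals
    have hpow : ∀ (f : ℝ → ℝ) (x : ℝ), ‖f x‖ ^ (2 : ℝ) = (f x) ^ 2 := by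
      intro f x
      rw [show (2 : ℝ) = ((2 : ℕ) : ℝ) by norm_num, Real.rpow_natCast, Real.norm_eq_abs, sq_abs]
    simp only [hpow] at hCS
    -- bound the integral of v²
    have hvbound : ∫ x in Set.Icc (0 : ℝ) 1, (Real.sqrt (a i x) + Real.sqrt (a j x)) ^ 2
        ≤ 4 * D := by
      have h2 : ∫ x in Set.Icc (0 : ℝ) 1, (Real.sqrt (a i x) + Real.sqrt (a j x)) ^ 2
          ≤ ∫ x in Set.Icc (0 : ℝ) 1, 2 * (a i x + a j x) := by
        refine setIntegral_mono_on hv2int (((hint i).add (hint j)).const_mul 2) hmeas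
          fun x hx => ?_
        have h1 := Real.sq_sqrt (hnni x hx)
        have h2 := Real.sq_sqrt (hnnj x hx)
        nlinarith [sq_nonneg (Real.sqrt (a i x) - Real.sqrt (a j x))]
      have h3 : ∫ x in Set.Icc (0 : ℝ) 1, 2 * (a i x + a j x)
          = 2 * ((∫ x in Set.Icc (0 : ℝ) 1, a i x) + ∫ x in Set.Icc (0 : ℝ) 1, a j x) := by
        rw [integral_const_mul, integral_add (hint i) (hint j)]
      have h6 := hD i
      have h7 := hD j
      linarith
    set Q : ℝ := ∫ x in Set.Icc (0 : ℝ) 1, (Real.sqrt (a i x) - Real.sqrt (a j x)) ^ 2 with hQ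
    set V : ℝ := ∫ x in Set.Icc (0 : ℝ) 1, (Real.sqrt (a i x) + Real.sqrt (a j x)) ^ 2 with hV
    have hQnn : 0 ≤ Q := by
      rw [hQ]; exact integral_nonneg fun x => sq_nonneg _
    have hVnn : 0 ≤ V := by
      rw [hV]; exact integral_nonneg fun x => sq_nonneg _
    have hsep' := hsep i j hi hj
    rw [heq] at hsep'
    have hchain : δ < Q ^ (1 / 2 : ℝ) * V ^ (1 / 2 : ℝ) := lt_of_lt_of_le hsep' hCS
    have hVle : V ^ (1 / 2 : ℝ) ≤ (4 * D) ^ (1 / 2 : ℝ) :=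
      Real.rpow_le_rpow hVnn hvbound (by norm_num)
    have hQrnn : (0 : ℝ) ≤ Q ^ (1 / 2 : ℝ) := Real.rpow_nonneg hQnn _
    have h4D : (0 : ℝ) ≤ 4 * D := by linarith
    have hchain2 : δ < Q ^ (1 / 2 : ℝ) * (4 * D) ^ (1 / 2 : ℝ) := by
      calc δ < Q ^ (1 / 2 : ℝ) * V ^ (1 / 2 : ℝ) := hchain
        _ ≤ Q ^ (1 / 2 : ℝ) * (4 * D) ^ (1 / 2 : ℝ) := by
            exact mul_le_mul_of_nonneg_left hVle hQrnn
    have hQsq : (Q ^ (1 / 2 : ℝ)) ^ 2 = Q := by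
      rw [← Real.rpow_natCast (Q ^ (1 / 2 : ℝ)) 2, ← Real.rpow_mul hQnn]
      norm_num
    have hDsq : ((4 * D) ^ (1 / 2 : ℝ)) ^ 2 = 4 * D := by
      rw [← Real.rpow_natCast ((4 * D) ^ (1 / 2 : ℝ)) 2, ← Real.rpow_mul h4D]
      norm_num
    have hDrnn : (0 : ℝ) ≤ (4 * D) ^ (1 / 2 : ℝ) := Real.rpow_nonneg h4D _
    have hfinal : δ ^ 2 < Q * (4 * D) := by
      nlinarith [hchain2, hδ, hQrnn, hDrnn, hQsq, hDsq]
    rw [div_le_iff₀ (by linarith : (0 : ℝ) < 4 * D)]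
    linarith
  -- conclusion
  refine ⟨δ ^ 2 / (8 * D), div_pos (pow_pos hδ 2) (by linarith), (4 * N + 2).toNat, fun n hn => ?_⟩
  have hn' : (4 * N + 2 : ℤ) ≤ (n : ℤ) := Int.toNat_le.mp hn
  set J : Finset ℤ := Finset.Icc (N - n + 1) (-N - 1) with hJ
  have hcard : (J.card : ℤ) = (n : ℤ) - 2 * N - 1 := by
    rw [hJ, Int.card_Icc_of_le _ _ (by omega)]
    ring
  have hq : 0 < δ ^ 2 / (4 * D) := div_pos (pow_pos hδ 2) (by linarith)
  calc ENNReal.ofReal (δ ^ 2 / (8 * D) * n)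
      ≤ ENNReal.ofReal ((J.card : ℝ) * (δ ^ 2 / (4 * D))) := by
        apply ENNReal.ofReal_le_ofReal
        have hcardR : (J.card : ℝ) = (n : ℝ) - 2 * N - 1 := by
          exact_mod_cast congrArg (Int.cast : ℤ → ℝ) hcard
        have hn2 : (4 * (N : ℝ) + 2) ≤ (n : ℝ) := by exact_mod_cast hn'
        have hNR : (0 : ℝ) < (N : ℝ) := by exact_mod_cast hN
        rw [hcardR]
        have hhalf : δ ^ 2 / (8 * D) = (δ ^ 2 / (4 * D)) / 2 := by ring
        rw [hhalf]
        nlinarith [hq]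
    _ = ∑ _k ∈ J, ENNReal.ofReal (δ ^ 2 / (4 * D)) := by
        rw [Finset.sum_const, ENNReal.ofReal_mul (by positivity : (0 : ℝ) ≤ (J.card : ℝ)),
          ENNReal.ofReal_natCast, nsmul_eq_mul]
    _ ≤ ∑ k ∈ J, ENNReal.ofReal
          (∫ x in Set.Icc (0 : ℝ) 1,
            (Real.sqrt (a (k + (n : ℤ)) x) - Real.sqrt (a k x)) ^ 2) := by
        refine Finset.sum_le_sum fun k hk => ?_
        rw [hJ, Finset.mem_Icc] at hk
        exact ENNReal.ofReal_le_ofReal (key (k + n) k (by omega) (by omega))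
    _ ≤ ∑' k : ℤ, ENNReal.ofReal
          (∫ x in Set.Icc (0 : ℝ) 1,
            (Real.sqrt (a (k + (n : ℤ)) x) - Real.sqrt (a k x)) ^ 2) := ENNReal.sum_le_tsum J
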